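/- Let g_s(t) = (√2/2)(α₀(s,t) + cos(3t)·α₁(s,t) + sin(3t)·α₂(s,t)) as above and let Γ_s(t) ∈ SO(3) be the frame of t ↦ g_s(t). Then Γ_s(t + 2π/3) = R·Γ_s(t) for all s, t, where R = [[-1/2, -√3/2, 0],[√3/2, -1/2, 0],[0,0,1]] is rotation by 2π/3 about the z-axis. -/

import Mathlib

noncomputable section

open Real Matrix

/-- Determinant of the 3×3 matrix whose *columns* are `v₁, v₂, v₃`. -/
def det3 (v₁ v₂ v₃ : Fin 3 → ℝ) : ℝ :=
  Matrix.det (Matrix.of ![v₁, v₂, v₃])ᵀ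

/-- `v` lies on the unit sphere `S² ⊂ ℝ³`. -/
def onSphere (v : Fin 3 → ℝ) : Prop :=
  v 0 ^ 2 + v 1 ^ 2 + v 2 ^ 2 = 1

/-- Euclidean norm on `ℝ³`. -/
def enorm3 (v : Fin 3 → ℝ) : ℝ :=
  Real.sqrt (v 0 ^ 2 + v 1 ^ 2 + v 2 ^ 2)

/-- Cross product on `ℝ³`. -/
def cross3 (u v : Fin 3 → ℝ) : Fin 3 → ℝ :=
  ![u 1 * v 2 - u 2 * v 1, u 2 * v 0 - u 0 * v 2, u 0 * v 1 - u 1 * v 0]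

/-- The frame of a spherical immersion: the matrix with columns
`γ(t)`, `γ'(t)/|γ'(t)|` and `γ(t) × (γ'(t)/|γ'(t)|)`. -/
def frame (γ : ℝ → Fin 3 → ℝ) (t : ℝ) : Matrix (Fin 3) (Fin 3) ℝ :=
  (Matrix.of
    ![γ t, (enorm3 (deriv γ t))⁻¹ • deriv γ t,
      cross3 (γ t) ((enorm3 (deriv γ t))⁻¹ • deriv γ t)])ᵀ

/-- The circle `ν_θ`. -/
def nuTheta (θ : ℝ) (t : ℝ) : Fin 3 → ℝ :=
  ![cos θ ^ 2 + sin θ ^ 2 * cos (2 * π * t),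
    sin θ * sin (2 * π * t),
    cos θ * sin θ * (1 - cos (2 * π * t))]

def alpha0 (s t : ℝ) : Fin 3 → ℝ := ![sin s * cos t, sin s * sin t, cos s]

def alpha1 (_s t : ℝ) : Fin 3 → ℝ := ![-sin t, cos t, 0]

def alpha2 (s t : ℝ) : Fin 3 → ℝ := ![-cos s * cos t, -cos s * sin t, sin s]

/-- The family of curves `g_s(t)` from the paper. -/
def gCurve (s : ℝ) (t : ℝ) : Fin 3 → ℝ :=
  (Real.sqrt 2 / 2) •
    (alpha0 s t + cos (3 * t) • alpha1 s t + sin (3 * t) • alpha2 s t)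

def R3 : Matrix (Fin 3) (Fin 3) ℝ :=
  !![-1/2, -Real.sqrt 3 / 2, 0; Real.sqrt 3 / 2, -1/2, 0; 0, 0, 1]

lemma sqrt3_sq : Real.sqrt 3 ^ 2 = 3 := Real.sq_sqrt (by norm_num)

lemma cos_shift (t : ℝ) : cos (t + 2 * π / 3) = -(1/2) * cos t - Real.sqrt 3 / 2 * sin t := by
  have h1 : cos (2 * π / 3) = -(1/2) := by
    have h : (2 * π / 3) = π - π/3 := by ring
    rw [h, Real.cos_pi_sub, Real.cos_pi_div_three]
  have h2 : sin (2 * π / 3) = Real.sqrt 3 / 2 := by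
    have h : (2 * π / 3) = π - π/3 := by ring
    rw [h, Real.sin_pi_sub, Real.sin_pi_div_three]
  rw [Real.cos_add, h1, h2]; ring

lemma sin_shift (t : ℝ) : sin (t + 2 * π / 3) = Real.sqrt 3 / 2 * cos t - 1/2 * sin t := by
  have h1 : cos (2 * π / 3) = -(1/2) := by
    have h : (2 * π / 3) = π - π/3 := by ring
    rw [h, Real.cos_pi_sub, Real.cos_pi_div_three]
  have h2 : sin (2 * π / 3) = Real.sqrt 3 / 2 := by
    have h : (2 * π / 3) = π - π/3 := by ring
    rw [h, Real.sin_pi_sub, Real.sin_pi_div_three]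
  rw [Real.sin_add, h1, h2]; ring

lemma cos3_shift (t : ℝ) : cos (3 * (t + 2 * π / 3)) = cos (3 * t) := by
  have h : 3 * (t + 2 * π / 3) = 3 * t + 2 * π := by ring
  rw [h, Real.cos_add_two_pi]

lemma sin3_shift (t : ℝ) : sin (3 * (t + 2 * π / 3)) = sin (3 * t) := by
  have h : 3 * (t + 2 * π / 3) = 3 * t + 2 * π := by ring
  rw [h, Real.sin_add_two_pi]

lemma g_shift (s t : ℝ) : gCurve s (t + 2 * π / 3) = R3.mulVec (gCurve s t) := by
  funext i
  fin_cases i <;>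
    simp [gCurve, alpha0, alpha1, alpha2, R3, Matrix.mulVec, dotProduct,
      Fin.sum_univ_three, cos_shift, sin_shift, cos3_shift, sin3_shift] <;> ring

lemma diff_g (s t : ℝ) : DifferentiableAt ℝ (gCurve s) t := by
  rw [differentiableAt_pi]
  intro i
  fin_cases i <;>
    · simp [gCurve, alpha0, alpha1, alpha2]
      fun_prop

lemma hasDerivAt_mulVec (A : Matrix (Fin 3) (Fin 3) ℝ) {f : ℝ → Fin 3 → ℝ}
    {f' : Fin 3 → ℝ} {t : ℝ} (hf : HasDerivAt f f' t) :
    HasDerivAt (fun u => A.mulVec (f u)) (A.mulVec f') t := by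
  rw [hasDerivAt_pi] at hf ⊢
  intro i
  simpa [Matrix.mulVec, dotProduct, Fin.sum_univ_three, Pi.add_def] using
    (((hf 0).const_mul (A i 0)).add ((hf 1).const_mul (A i 1))).add ((hf 2).const_mul (A i 2))

lemma deriv_g_shift (s t : ℝ) :
    deriv (gCurve s) (t + 2 * π / 3) = R3.mulVec (deriv (gCurve s) t) := by
  have h1 : HasDerivAt (fun u => gCurve s (u + 2 * π / 3))
      (deriv (gCurve s) (t + 2 * π / 3)) t := by
    have := ((diff_g s (t + 2 * π / 3)).hasDerivAt).scomp t
      ((hasDerivAt_id t).add_const (2 * π / 3))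
    simpa [Function.comp_def] using this
  have h2 : HasDerivAt (fun u => R3.mulVec (gCurve s u))
      (R3.mulVec (deriv (gCurve s) t)) t :=
    hasDerivAt_mulVec R3 (diff_g s t).hasDerivAt
  have heq : (fun u => gCurve s (u + 2 * π / 3)) = fun u => R3.mulVec (gCurve s u) :=
    funext fun u => g_shift s u
  rw [heq] at h1
  exact h1.unique h2

lemma enorm3_mulVec (v : Fin 3 → ℝ) : enorm3 (R3.mulVec v) = enorm3 v := by
  unfold enorm3
  congr 1
  simp [R3, Matrix.mulVec, dotProduct, Fin.sum_univ_three]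
  linear_combination ((v 0 ^ 2 + v 1 ^ 2) / 4) * sqrt3_sq

lemma cross3_mulVec (u v : Fin 3 → ℝ) :
    cross3 (R3.mulVec u) (R3.mulVec v) = R3.mulVec (cross3 u v) := by
  funext i
  fin_cases i <;>
    simp [cross3, R3, Matrix.mulVec, dotProduct, Fin.sum_univ_three]
  · ring
  · ring
  · linear_combination ((u 0 * v 1 - u 1 * v 0) / 4) * sqrt3_sq

lemma mul_transpose_cols (A : Matrix (Fin 3) (Fin 3) ℝ) (v₁ v₂ v₃ : Fin 3 → ℝ) :
    A * (Matrix.of ![v₁, v₂, v₃])ᵀ =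
      (Matrix.of ![A.mulVec v₁, A.mulVec v₂, A.mulVec v₃])ᵀ := by
  ext i j
  fin_cases j <;>
    simp [Matrix.mul_apply, Matrix.mulVec, dotProduct, Fin.sum_univ_three,
      Matrix.vecHead, Matrix.vecTail]

/-- The frame `Γ_s` of `g_s` satisfies `Γ_s(t + 2π/3) = R · Γ_s(t)` where `R` is
the rotation by `2π/3` about the `z`-axis. -/
theorem frame_gCurve_symmetry (s t : ℝ) :
    frame (gCurve s) (t + 2 * π / 3) =
      !![-1/2, -Real.sqrt 3 / 2, 0; Real.sqrt 3 / 2, -1/2, 0; 0, 0, 1] *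
        frame (gCurve s) t := by
  show frame (gCurve s) (t + 2 * π / 3) = R3 * frame (gCurve s) t
  have h2 : (enorm3 (deriv (gCurve s) (t + 2 * π / 3)))⁻¹ • deriv (gCurve s) (t + 2 * π / 3)
      = R3.mulVec ((enorm3 (deriv (gCurve s) t))⁻¹ • deriv (gCurve s) t) := by
    rw [deriv_g_shift, enorm3_mulVec, Matrix.mulVec_smul]
  rw [frame, frame, mul_transpose_cols, g_shift, h2, cross3_mulVec]
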